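/- Let R be a commutative ring, I an ideal, and y_1,...,y_d a regular sequence contained in I. Suppose R/I admits a finite free resolution 0 → R^n → ⋯ → R → R/I → 0 of length d, and the Koszul complex on y_1,...,y_d maps to this resolution lifting the surjection R/(y) → R/I, with the top map R → R^n given by (f_1,...,f_n). Then (y_1,...,y_d) : I = (y_1,...,y_d) + (f_1,...,f_n). -/

import Mathlib

open Finset in
/-- The degree-`j` term of the Koszul complex on `d` elements: a free module
with basis the `j`-element subsets of `{1, …, d}` (i.e. `⋀^j R^d`). -/
def KoszulTerm (R : Type*) [CommRing R] (d j : ℕ) : Type _ :=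
  {s : Finset (Fin d) // s.card = j} → R

noncomputable instance (R : Type*) [CommRing R] (d j : ℕ) :
    AddCommGroup (KoszulTerm R d j) := by unfold KoszulTerm; infer_instance

noncomputable instance (R : Type*) [CommRing R] (d j : ℕ) :
    Module R (KoszulTerm R d j) := by unfold KoszulTerm; infer_instance

open Finset in
/-- The Koszul differential `K_{j+1} → K_j` on the sequence `y`, given on basis
elements by `e_s ↦ Σ_{i ∈ s} (-1)^{#{i' ∈ s | i' < i}} yᵢ e_{s \ {i}}`. -/
noncomputable def koszulD {R : Type*} [CommRing R] {d : ℕ} (y : Fin d → R) (j : ℕ) :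
    KoszulTerm R d (j + 1) →ₗ[R] KoszulTerm R d j :=
  Matrix.mulVecLin
    (Matrix.of fun (t : {s : Finset (Fin d) // s.card = j})
        (s : {s : Finset (Fin d) // s.card = j + 1}) =>
      ∑ i ∈ s.1, if s.1.erase i = t.1 then (-1 : R) ^ (s.1.filter (· < i)).card * y i else 0)

namespace KoszulProof

open Finset

variable {R : Type*} [CommRing R] {d : ℕ}

abbrev Idx (d j : ℕ) := {s : Finset (Fin d) // s.card = j}

lemma koszulD_apply (y : Fin d → R) (j : ℕ) (v : KoszulTerm R d (j+1)) (t : Idx d j) :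
    koszulD y j v t = ∑ i : Fin d,
      if h : i ∈ t.1 then 0
      else (-1:R)^((t.1.filter (· < i)).card) * y i *
        v ⟨insert i t.1, by rw [card_insert_of_notMem h, t.2]⟩ := by
  show (Matrix.mulVecLin _ v) t = _
  show ∑ s : Idx d (j+1), (∑ i ∈ s.1, if s.1.erase i = t.1
      then (-1 : R) ^ (s.1.filter (· < i)).card * y i else 0) * v s = _
  have key : ∀ s : Idx d (j+1),
      (∑ i ∈ s.1, if s.1.erase i = t.1
        then (-1 : R) ^ (s.1.filter (· < i)).card * y i else 0) * v s
      = ∑ i : Fin d, (if i ∈ s.1 then (if s.1.erase i = t.1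
          then (-1 : R) ^ (s.1.filter (· < i)).card * y i else 0) else 0) * v s := by
    intro s
    simp only [ite_mul, zero_mul, Finset.sum_ite_mem, Finset.univ_inter, Finset.sum_mul]
  rw [Finset.sum_congr rfl (fun s _ => key s), Finset.sum_comm]
  refine Finset.sum_congr rfl (fun i _ => ?_)
  by_cases h : i ∈ t.1
  · rw [dif_pos h]
    refine Finset.sum_eq_zero (fun s _ => ?_)
    rcases Decidable.em (i ∈ s.1) with hi | hi
    · rw [if_pos hi]
      have : ¬ (s.1.erase i = t.1) := fun he => (he ▸ (Finset.notMem_erase i s.1)) h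
      rw [if_neg this, zero_mul]
    · rw [if_neg hi, zero_mul]
  · rw [dif_neg h]
    have hins : (insert i t.1).card = j + 1 := by rw [card_insert_of_notMem h, t.2]
    refine Finset.sum_eq_single_of_mem (⟨insert i t.1, hins⟩ : Idx d (j+1))
      (Finset.mem_univ _) ?_ |>.trans ?_
    · intro s _ hne
      rcases Decidable.em (i ∈ s.1) with hi | hi
      · rw [if_pos hi]
        have : ¬ (s.1.erase i = t.1) := by
          intro he
          exact hne (Subtype.ext ((Finset.insert_erase hi).symm.trans (congrArg (insert i) he)))
        rw [if_neg this, zero_mul]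
      · rw [if_neg hi, zero_mul]
    · have h1 : i ∈ insert i t.1 := Finset.mem_insert_self i t.1
      have h2 : (insert i t.1).erase i = t.1 := Finset.erase_insert h
      rw [if_pos h1, if_pos h2]
      have h3 : (insert i t.1).filter (· < i) = t.1.filter (· < i) := by
        rw [Finset.filter_insert, if_neg (lt_irrefl i)]
      rw [h3]


section Split

variable {R : Type*} [CommRing R] {d : ℕ}

open Fin

/-- image of a subset of `Fin d` in `Fin (d+1)` -/
def mapF (s : Finset (Fin d)) : Finset (Fin (d+1)) := s.map Fin.castSuccEmb

/-- preimage of a subset of `Fin (d+1)` in `Fin d` -/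
def pre (t : Finset (Fin (d+1))) : Finset (Fin d) :=
  Finset.univ.filter (fun i => Fin.castSucc i ∈ t)

@[simp] lemma mem_mapF {a : Fin (d+1)} {s : Finset (Fin d)} :
    a ∈ mapF s ↔ ∃ i ∈ s, Fin.castSucc i = a := by
  simp only [mapF, Finset.mem_map, Fin.castSuccEmb]
  rfl

@[simp] lemma castSucc_mem_mapF {i : Fin d} {s : Finset (Fin d)} :
    Fin.castSucc i ∈ mapF s ↔ i ∈ s := by
  simp only [mem_mapF]
  exact ⟨fun ⟨i', hi', he⟩ => (Fin.castSucc_injective d he) ▸ hi', fun h => ⟨i, h, rfl⟩⟩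

lemma last_not_mem_mapF {s : Finset (Fin d)} : Fin.last d ∉ mapF s := by
  simp only [mem_mapF]
  rintro ⟨i, _, he⟩
  exact absurd he (Fin.ne_of_lt (Fin.castSucc_lt_last i))

@[simp] lemma card_mapF (s : Finset (Fin d)) : (mapF s).card = s.card := Finset.card_map _

@[simp] lemma mem_pre {i : Fin d} {t : Finset (Fin (d+1))} :
    i ∈ pre t ↔ Fin.castSucc i ∈ t := by simp [pre]

lemma pre_mapF (s : Finset (Fin d)) : pre (mapF s) = s := by
  ext i; simp

lemma mapF_pre {t : Finset (Fin (d+1))} (h : Fin.last d ∉ t) : mapF (pre t) = t := by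
  ext a
  simp only [mem_mapF, mem_pre]
  constructor
  · rintro ⟨i, hi, rfl⟩; exact hi
  · intro ha
    have hne : a ≠ Fin.last d := fun he => h (he ▸ ha)
    obtain ⟨i, rfl⟩ := Fin.exists_castSucc_eq.mpr hne
    exact ⟨i, ha, rfl⟩

lemma pre_erase_last (t : Finset (Fin (d+1))) : pre (t.erase (Fin.last d)) = pre t := by
  ext i
  simp only [mem_pre, Finset.mem_erase]
  exact ⟨fun h => h.2, fun h => ⟨Fin.ne_of_lt (Fin.castSucc_lt_last i), h⟩⟩

lemma mapF_pre_of_mem {t : Finset (Fin (d+1))} (h : Fin.last d ∈ t) :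
    mapF (pre t) = t.erase (Fin.last d) := by
  rw [← pre_erase_last, mapF_pre (Finset.notMem_erase _ _)]

lemma card_pre_of_not_mem {t : Finset (Fin (d+1))} (h : Fin.last d ∉ t) :
    (pre t).card = t.card := by rw [← card_mapF, mapF_pre h]

lemma card_pre_of_mem {t : Finset (Fin (d+1))} (h : Fin.last d ∈ t) :
    (pre t).card = t.card - 1 := by
  rw [← card_mapF, mapF_pre_of_mem h, Finset.card_erase_of_mem h]

/-- restriction to subsets avoiding `last` -/
def res1 (j : ℕ) (v : KoszulTerm R (d+1) j) : KoszulTerm R d j :=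
  fun s => v ⟨mapF s.1, by rw [card_mapF, s.2]⟩

/-- restriction to subsets containing `last` -/
def res2 (j : ℕ) (v : KoszulTerm R (d+1) (j+1)) : KoszulTerm R d j :=
  fun s => v ⟨insert (Fin.last d) (mapF s.1),
    by rw [Finset.card_insert_of_notMem last_not_mem_mapF, card_mapF, s.2]⟩

/-- reassemble -/
def glue (j : ℕ) (p : KoszulTerm R d (j+1)) (u : KoszulTerm R d j) :
    KoszulTerm R (d+1) (j+1) :=
  fun t => if h : Fin.last d ∈ t.1
    then u ⟨pre t.1, by rw [card_pre_of_mem h, t.2]; rfl⟩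
    else p ⟨pre t.1, by rw [card_pre_of_not_mem h, t.2]⟩

lemma res1_glue (j : ℕ) (p : KoszulTerm R d (j+1)) (u : KoszulTerm R d j) :
    res1 (j+1) (glue j p u) = p := by
  funext s
  show glue j p u _ = p s
  rw [glue, dif_neg (show Fin.last d ∉ mapF s.1 from last_not_mem_mapF)]
  congr 1
  exact Subtype.ext (pre_mapF s.1)

lemma res2_glue (j : ℕ) (p : KoszulTerm R d (j+1)) (u : KoszulTerm R d j) :
    res2 j (glue j p u) = u := by
  funext s
  show glue j p u _ = u s
  have hl : Fin.last d ∈ insert (Fin.last d) (mapF s.1) := Finset.mem_insert_self _ _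
  rw [glue, dif_pos hl]
  congr 1
  refine Subtype.ext ?_
  show pre (insert (Fin.last d) (mapF s.1)) = s.1
  have : pre (insert (Fin.last d) (mapF s.1)) = pre (mapF s.1) := by
    ext i
    simp only [mem_pre, Finset.mem_insert]
    exact ⟨fun h => h.resolve_left (Fin.ne_of_lt (Fin.castSucc_lt_last i)),
      fun h => Or.inr h⟩
  rw [this, pre_mapF]

lemma ext_res {j : ℕ} (v w : KoszulTerm R (d+1) (j+1))
    (h1 : res1 (j+1) v = res1 (j+1) w) (h2 : res2 j v = res2 j w) : v = w := by
  funext t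
  by_cases hl : Fin.last d ∈ t.1
  · have hc : (pre t.1).card = j := by rw [card_pre_of_mem hl, t.2]; rfl
    have hset : insert (Fin.last d) (mapF (pre t.1)) = t.1 := by
      rw [mapF_pre_of_mem hl, Finset.insert_erase hl]
    have hv := congrFun h2 ⟨pre t.1, hc⟩
    show v t = w t
    have ev : res2 j v ⟨pre t.1, hc⟩ = v t := by
      show v _ = v t; congr 1; exact Subtype.ext hset
    have ew : res2 j w ⟨pre t.1, hc⟩ = w t := by
      show w _ = w t; congr 1; exact Subtype.ext hset
    rw [← ev, ← ew, hv]
  · have hc : (pre t.1).card = j + 1 := by rw [card_pre_of_not_mem hl, t.2]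
    have hset : mapF (pre t.1) = t.1 := mapF_pre hl
    have hv := congrFun h1 ⟨pre t.1, hc⟩
    show v t = w t
    have ev : res1 (j+1) v ⟨pre t.1, hc⟩ = v t := by
      show v _ = v t; congr 1; exact Subtype.ext hset
    have ew : res1 (j+1) w ⟨pre t.1, hc⟩ = w t := by
      show w _ = w t; congr 1; exact Subtype.ext hset
    rw [← ev, ← ew, hv]

lemma ext_res0 (v w : KoszulTerm R (d+1) 0) (h1 : res1 0 v = res1 0 w) : v = w := by
  funext t
  have ht : t.1 = ∅ := Finset.card_eq_zero.mp t.2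
  have hc : (∅ : Finset (Fin d)).card = 0 := Finset.card_empty
  have hv := congrFun h1 ⟨∅, hc⟩
  have ev : res1 0 v ⟨∅, hc⟩ = v t := by
    show v _ = v t; congr 1
    exact Subtype.ext (by show mapF ∅ = t.1; rw [ht]; rfl)
  have ew : res1 0 w ⟨∅, hc⟩ = w t := by
    show w _ = w t; congr 1
    exact Subtype.ext (by show mapF ∅ = t.1; rw [ht]; rfl)
  rw [← ev, ← ew, hv]

end Split



section Elemmas

variable {R : Type*} [CommRing R] {d : ℕ}

open Finset

lemma filter_lt_mapF (s : Finset (Fin d)) (i : Fin d) :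
    (mapF s).filter (· < Fin.castSucc i) = mapF (s.filter (· < i)) := by
  ext a
  simp only [Finset.mem_filter, mem_mapF]
  constructor
  · rintro ⟨⟨i', hi', rfl⟩, hlt⟩
    exact ⟨i', ⟨hi', Fin.castSucc_lt_castSucc_iff.mp hlt⟩, rfl⟩
  · rintro ⟨i', ⟨hi', hlt⟩, rfl⟩
    exact ⟨⟨i', hi', rfl⟩, Fin.castSucc_lt_castSucc_iff.mpr hlt⟩

lemma filter_lt_last (s : Finset (Fin d)) :
    (mapF s).filter (· < Fin.last d) = mapF s := by
  refine Finset.filter_true_of_mem (fun a ha => ?_)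
  obtain ⟨i, _, rfl⟩ := mem_mapF.mp ha
  exact Fin.castSucc_lt_last i

lemma mapF_insert (i : Fin d) (s : Finset (Fin d)) :
    mapF (insert i s) = insert (Fin.castSucc i) (mapF s) := by
  simp only [mapF, Finset.map_insert]
  rfl

/-- E1: the `last`-free component of the differential. -/
lemma dK_res1 (y : Fin (d+1) → R) (j : ℕ) (v : KoszulTerm R (d+1) (j+1)) (s : Idx d j) :
    res1 j (koszulD y j v) s
      = koszulD (fun i => y (Fin.castSucc i)) j (res1 (j+1) v) s
        + (-1:R)^j * y (Fin.last d) * res2 j v s := by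
  show koszulD y j v ⟨mapF s.1, _⟩ = _
  rw [koszulD_apply, koszulD_apply, Fin.sum_univ_castSucc]
  congr 1
  · -- the castSucc part
    refine Finset.sum_congr rfl (fun i _ => ?_)
    by_cases h : i ∈ s.1
    · rw [dif_pos (show Fin.castSucc i ∈ mapF s.1 from castSucc_mem_mapF.mpr h), dif_pos h]
    · rw [dif_neg (show Fin.castSucc i ∉ mapF s.1 from fun hc => h (castSucc_mem_mapF.mp hc)),
        dif_neg h]
      rw [filter_lt_mapF, card_mapF]
      congr 1
      show v _ = res1 (j+1) v _
      show v _ = v _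
      congr 1
      exact Subtype.ext (mapF_insert i s.1).symm
  · -- the last part
    rw [dif_neg (show Fin.last d ∉ mapF s.1 from last_not_mem_mapF)]
    refine congrArg₂ (· * ·) (congrArg₂ (· * ·) ?_ rfl) ?_
    · rw [show ((⟨mapF s.1, by rw [card_mapF, s.2]⟩ : Idx (d+1) j) : Finset (Fin (d+1))).filter
          (· < Fin.last d) = mapF s.1 from filter_lt_last s.1, card_mapF, s.2]
    · rfl

/-- E2: the `last`-containing component of the differential. -/
lemma dK_res2 (y : Fin (d+1) → R) (j : ℕ) (v : KoszulTerm R (d+1) (j+2)) (s : Idx d j) :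
    res2 j (koszulD y (j+1) v) s
      = koszulD (fun i => y (Fin.castSucc i)) j (res2 (j+1) v) s := by
  show koszulD y (j+1) v ⟨insert (Fin.last d) (mapF s.1), _⟩ = _
  rw [koszulD_apply, koszulD_apply, Fin.sum_univ_castSucc]
  have hlast : Fin.last d ∈ insert (Fin.last d) (mapF s.1) := Finset.mem_insert_self _ _
  rw [dif_pos hlast, add_zero]
  refine Finset.sum_congr rfl (fun i _ => ?_)
  have hmem : Fin.castSucc i ∈ insert (Fin.last d) (mapF s.1) ↔ i ∈ s.1 := by
    simp only [Finset.mem_insert, castSucc_mem_mapF]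
    exact ⟨fun h => h.resolve_left (Fin.ne_of_lt (Fin.castSucc_lt_last i)), Or.inr⟩
  by_cases h : i ∈ s.1
  · rw [dif_pos (hmem.mpr h), dif_pos h]
  · rw [dif_neg (fun hc => h (hmem.mp hc)), dif_neg h]
    have hfilter : (insert (Fin.last d) (mapF s.1)).filter (· < Fin.castSucc i)
        = (mapF s.1).filter (· < Fin.castSucc i) := by
      rw [Finset.filter_insert, if_neg (by exact not_lt_of_gt (Fin.castSucc_lt_last i))]
    rw [hfilter, filter_lt_mapF, card_mapF]
    congr 1
    show v _ = res2 (j+1) v _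
    show v _ = v _
    congr 1
    refine Subtype.ext ?_
    show insert (Fin.castSucc i) (insert (Fin.last d) (mapF s.1))
      = insert (Fin.last d) (mapF (insert i s.1))
    rw [mapF_insert, Finset.insert_comm]

end Elemmas

section Complex

variable {R : Type*} [CommRing R] {d : ℕ}

open Finset

lemma E1f (y : Fin (d+1) → R) (m : ℕ) (v : KoszulTerm R (d+1) (m+1)) :
    res1 m (koszulD y m v)
      = koszulD (fun i => y (Fin.castSucc i)) m (res1 (m+1) v)
        + ((-1:R)^m * y (Fin.last d)) • res2 m v := by
  funext s
  rw [dK_res1]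
  rfl

lemma E2f (y : Fin (d+1) → R) (m : ℕ) (v : KoszulTerm R (d+1) (m+2)) :
    res2 m (koszulD y (m+1) v)
      = koszulD (fun i => y (Fin.castSucc i)) m (res2 (m+1) v) := by
  funext s
  rw [dK_res2]

lemma res1_zero (m : ℕ) : res1 m (0 : KoszulTerm R (d+1) m) = 0 := rfl
lemma res2_zero (m : ℕ) : res2 m (0 : KoszulTerm R (d+1) (m+1)) = 0 := rfl

lemma koszulD_val_mem (y : Fin d → R) (j : ℕ) (v : KoszulTerm R d (j+1)) (t : Idx d j) :
    koszulD y j v t ∈ Ideal.span (Set.range y) := by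
  rw [koszulD_apply]
  refine Ideal.sum_mem _ (fun i _ => ?_)
  by_cases h : i ∈ t.1
  · rw [dif_pos h]; exact (Ideal.span _).zero_mem
  · rw [dif_neg h]
    exact Ideal.mul_mem_right _ _ (Ideal.mul_mem_left _ _ (Ideal.subset_span ⟨i, rfl⟩))

theorem koszulD_sq : ∀ {d : ℕ} (y : Fin d → R) (j : ℕ) (v : KoszulTerm R d (j+2)),
    koszulD y j (koszulD y (j+1) v) = 0 := by
  intro d
  induction d with
  | zero =>
    intro y j v
    funext t
    rw [koszulD_apply]
    simp only [Finset.univ_eq_empty, Finset.sum_empty]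
    rfl
  | succ d ih =>
    intro y j v
    set y' := fun i : Fin d => y (Fin.castSucc i) with hy'
    have hsign : ((-1:R)^(j+1) * y (Fin.last d)) = -((-1:R)^j * y (Fin.last d)) := by
      rw [pow_succ]; ring
    have hres1 : res1 j (koszulD y j (koszulD y (j+1) v)) = 0 := by
      rw [E1f y j (koszulD y (j+1) v), E1f y (j+1) v, E2f y j v, map_add, map_smul,
        ih y' j (res1 (j+2) v), zero_add, hsign, neg_smul, neg_add_cancel]
    cases j with
    | zero =>
      refine ext_res0 _ 0 ?_
      rw [hres1, res1_zero]
    | succ j' =>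
      refine ext_res _ 0 ?_ ?_
      · rw [hres1, res1_zero]
      · rw [E2f y j' (koszulD y (j'+2) v), E2f y (j'+1) v, ih y' j' (res2 (j'+2) v), res2_zero]

end Complex

section Regular

variable {R : Type*} [CommRing R] {d : ℕ}

/-- `y` is a (weakly) regular sequence: each `y i` is a nonzerodivisor modulo
the earlier ones. -/
def RegSeq (y : Fin d → R) : Prop :=
  ∀ (i : Fin d) (r : R), y i * r ∈ Ideal.span (y '' {k | k < i}) →
    r ∈ Ideal.span (y '' {k | k < i})

lemma regSeq_castSucc {y : Fin (d+1) → R} (h : RegSeq y) :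
    RegSeq (fun i : Fin d => y (Fin.castSucc i)) := by
  intro i r hmem
  have himg : (fun i : Fin d => y (Fin.castSucc i)) '' {k | k < i}
      = y '' {k : Fin (d+1) | k < Fin.castSucc i} := by
    ext a
    simp only [Set.mem_image, Set.mem_setOf_eq]
    constructor
    · rintro ⟨k, hk, rfl⟩
      exact ⟨Fin.castSucc k, Fin.castSucc_lt_castSucc_iff.mpr hk, rfl⟩
    · rintro ⟨k, hk, hke⟩
      have hne : k ≠ Fin.last d :=
        Fin.ne_of_lt (lt_of_lt_of_le hk (Fin.le_last _))
      obtain ⟨k', rfl⟩ := Fin.exists_castSucc_eq.mpr hne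
      exact ⟨k', Fin.castSucc_lt_castSucc_iff.mp hk, hke⟩
  rw [himg] at hmem ⊢
  exact h (Fin.castSucc i) r hmem

lemma range_comp_castSucc (y : Fin (d+1) → R) :
    Set.range (fun i : Fin d => y (Fin.castSucc i)) = y '' {k | k < Fin.last d} := by
  ext b
  simp only [Set.mem_range, Set.mem_image, Set.mem_setOf_eq]
  constructor
  · rintro ⟨i, rfl⟩; exact ⟨Fin.castSucc i, Fin.castSucc_lt_last i, rfl⟩
  · rintro ⟨k, hk, rfl⟩
    obtain ⟨i, rfl⟩ := Fin.exists_castSucc_eq.mpr (Fin.ne_of_lt hk)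
    exact ⟨i, rfl⟩

theorem koszul_exact : ∀ {d : ℕ} (y : Fin d → R), RegSeq y →
    ∀ (j : ℕ) (z : KoszulTerm R d (j+1)), koszulD y j z = 0 →
    ∃ w : KoszulTerm R d (j+2), koszulD y (j+1) w = z := by
  intro d
  induction d with
  | zero =>
    intro y _ j z _
    refine ⟨0, ?_⟩
    have hz0 : z = 0 := by
      funext t
      have h0 : t.1.card = 0 := Nat.le_zero.mp
        ((Finset.card_le_card (Finset.subset_univ t.1)).trans (by simp))
      rw [t.2] at h0
      exact absurd h0 (Nat.succ_ne_zero j)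
    rw [hz0, map_zero]
  | succ d ih =>
    intro y hy j z hz
    set y' := fun i : Fin d => y (Fin.castSucc i) with hy'def
    have hy2 : RegSeq y' := regSeq_castSucc hy
    set z1 := res1 (j+1) z with hz1def
    set z2 := res2 j z with hz2def
    have hsign : ((-1:R)^(j+1) * y (Fin.last d)) = -((-1:R)^j * y (Fin.last d)) := by
      rw [pow_succ]; ring
    have eq1 : koszulD y' j z1 = ((-1:R)^(j+1) * y (Fin.last d)) • z2 := by
      have h := E1f y j z
      rw [hz, res1_zero] at h
      rw [hsign, neg_smul]
      exact (neg_eq_of_add_eq_zero_left h.symm).symm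
    -- Step 1: find `u` with `d' u = z2`
    have hstep1 : ∃ u : KoszulTerm R d (j+1), koszulD y' j u = z2 := by
      cases j with
      | succ j' =>
        have h2 := E2f y j' z
        rw [hz, res2_zero] at h2
        exact ih y' hy2 j' z2 h2.symm
      | zero =>
        set e0 : Idx d 0 := ⟨∅, Finset.card_empty⟩ with he0
        have hrange := range_comp_castSucc y
        have hmem : y (Fin.last d) * z2 e0 ∈ Ideal.span (y '' {k | k < Fin.last d}) := by
          have hval := congrFun eq1 e0
          have hv : koszulD y' 0 z1 e0 = ((-1:R)^(0+1) * y (Fin.last d)) * z2 e0 := hval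
          have : y (Fin.last d) * z2 e0 = -(koszulD y' 0 z1 e0) := by
            rw [hv]; ring
          rw [this, ← hrange]
          exact neg_mem (koszulD_val_mem y' 0 z1 e0)
        have hc := hy (Fin.last d) (z2 e0) hmem
        rw [← hrange] at hc
        obtain ⟨cf, hcf⟩ := Submodule.mem_span_range_iff_exists_fun R |>.mp hc
        refine ⟨fun s => ∑ i ∈ s.1, cf i, ?_⟩
        funext t
        have ht : t = e0 := Subtype.ext (Finset.card_eq_zero.mp t.2)
        rw [ht]
        have key : koszulD y' 0 (fun s : Idx d 1 => ∑ i' ∈ s.1, cf i') e0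
            = ∑ i, y' i * cf i := by
          refine (koszulD_apply y' 0 _ e0).trans ?_
          refine Finset.sum_congr rfl (fun i _ => ?_)
          rw [dif_neg (show i ∉ (e0 : Idx d 0).1 from Finset.notMem_empty i)]
          show (-1:R)^(((∅ : Finset (Fin d)).filter (· < i)).card) * y' i *
            (∑ i' ∈ insert i (∅ : Finset (Fin d)), cf i') = _
          rw [Finset.filter_empty, Finset.card_empty, pow_zero, one_mul,
            Finset.insert_empty, Finset.sum_singleton]
        rw [key, ← hcf]
        exact Finset.sum_congr rfl (fun i _ => by rw [smul_eq_mul, mul_comm])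
    obtain ⟨u, hu⟩ := hstep1
    -- Step 2
    set z1' := z1 - ((-1:R)^(j+1) * y (Fin.last d)) • u with hz1'def
    have hdz1' : koszulD y' j z1' = 0 := by
      rw [hz1'def, map_sub, map_smul, hu, eq1, sub_self]
    obtain ⟨p, hp⟩ := ih y' hy2 j z1' hdz1'
    -- Step 3
    refine ⟨glue (j+1) p u, ?_⟩
    refine ext_res _ _ ?_ ?_
    · rw [E1f y (j+1) (glue (j+1) p u), res1_glue, res2_glue, hp, hz1'def,
        sub_add_cancel]
    · rw [E2f y j (glue (j+1) p u), res2_glue, hu]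

end Regular

section Generic

variable {R : Type*} [CommRing R]

lemma exists_comp_eq {M N P : Type*} [AddCommGroup M] [Module R M]
    [AddCommGroup N] [Module R N] [AddCommGroup P] [Module R P]
    {κ : Type*} (b : Module.Basis κ R M)
    (g : N →ₗ[R] P) (φ : M →ₗ[R] P) (h : ∀ x, φ x ∈ LinearMap.range g) :
    ∃ ψ : M →ₗ[R] N, g.comp ψ = φ := by
  choose c hc using fun i : κ => h (b i)
  refine ⟨b.constr ℕ c, b.ext fun i => ?_⟩
  rw [LinearMap.comp_apply, Module.Basis.constr_basis]
  exact hc i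

theorem exists_chain_contraction
    (S : ℕ → Type*) [∀ j, AddCommGroup (S j)] [∀ j, Module R (S j)]
    (G : ℕ → Type*) [∀ j, AddCommGroup (G j)] [∀ j, Module R (G j)]
    (κ : ℕ → Type) (bS : ∀ j, Module.Basis (κ j) R (S j))
    (dS : ∀ j, S (j+1) →ₗ[R] S j) (dG : ∀ j, G (j+1) →ₗ[R] G j)
    (θ : ∀ j, S j →ₗ[R] G j)
    (hdSS : ∀ j, (dS j).comp (dS (j+1)) = 0)
    (hθ : ∀ j, (dG j).comp (θ (j+1)) = (θ j).comp (dS j))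
    (h0 : ∀ v, θ 0 v ∈ LinearMap.range (dG 0))
    (hex : ∀ j (x : G (j+1)), dG j x = 0 → x ∈ LinearMap.range (dG (j+1))) :
    ∃ h : ∀ j, S j →ₗ[R] G (j+1),
      (dG 0).comp (h 0) = θ 0 ∧
      ∀ j, (dG (j+1)).comp (h (j+1)) = θ (j+1) - (h j).comp (dS j) := by
  let Inv : ∀ j, (S j →ₗ[R] G (j+1)) → Prop := fun j h =>
    ((dG j).comp h).comp (dS j) = (θ j).comp (dS j)
  have step : ∀ j (h : S j →ₗ[R] G (j+1)), Inv j h →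
      ∃ h' : S (j+1) →ₗ[R] G (j+2),
        (dG (j+1)).comp h' = θ (j+1) - h.comp (dS j) := by
    intro j h hInv
    refine exists_comp_eq (bS (j+1)) (dG (j+1)) (θ (j+1) - h.comp (dS j)) (fun x => ?_)
    refine hex j _ ?_
    have h1 := LinearMap.congr_fun (hθ j) x
    have h2 := LinearMap.congr_fun hInv x
    simp only [LinearMap.comp_apply, LinearMap.sub_apply] at h1 h2 ⊢
    rw [map_sub, h1, h2, sub_self]
  have inv_next : ∀ j (h : S j →ₗ[R] G (j+1)) (h' : S (j+1) →ₗ[R] G (j+2)),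
      (dG (j+1)).comp h' = θ (j+1) - h.comp (dS j) → Inv (j+1) h' := by
    intro j h h' he
    show ((dG (j+1)).comp h').comp (dS (j+1)) = _
    rw [he, LinearMap.sub_comp, LinearMap.comp_assoc, hdSS j, LinearMap.comp_zero, sub_zero]
  obtain ⟨h₀, hh₀⟩ := exists_comp_eq (bS 0) (dG 0) (θ 0) h0
  have inv₀ : Inv 0 h₀ := by
    show ((dG 0).comp h₀).comp (dS 0) = _
    rw [hh₀]
  let T : ℕ → Type _ := fun j => {p : (S j →ₗ[R] G (j+1)) × (S (j+1) →ₗ[R] G (j+2)) //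
      (dG (j+1)).comp p.2 = θ (j+1) - p.1.comp (dS j)}
  let base : T 0 := ⟨(h₀, Classical.choose (step 0 h₀ inv₀)),
    Classical.choose_spec (step 0 h₀ inv₀)⟩
  let next : ∀ j, T j → T (j+1) := fun j p =>
    ⟨(p.1.2, Classical.choose (step (j+1) p.1.2 (inv_next j p.1.1 p.1.2 p.2))),
     Classical.choose_spec (step (j+1) p.1.2 (inv_next j p.1.1 p.1.2 p.2))⟩
  let HH : ∀ j, T j := fun j => Nat.rec base next j
  refine ⟨fun j => (HH j).1.1, hh₀, fun j => (HH j).2⟩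

lemma apply_mem_of_forall_mem {ι κ' : Type*} [Fintype ι] [DecidableEq ι]
    (φ : (ι → R) →ₗ[R] (κ' → R)) (x : ι → R) (J : Ideal R)
    (hx : ∀ i, x i ∈ J) (k : κ') : φ x k ∈ J := by
  have hrep : φ x = ∑ i, x i • φ (fun j => if i = j then (1:R) else 0) := by
    conv_lhs => rw [pi_eq_sum_univ x]
    rw [map_sum]
    exact Finset.sum_congr rfl (fun i _ => by rw [map_smul])
  rw [hrep, Finset.sum_apply]
  refine Ideal.sum_mem _ (fun i _ => ?_)
  rw [Pi.smul_apply, smul_eq_mul]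
  exact Ideal.mul_mem_right _ _ (hx i)

end Generic

section RegConv

variable {R : Type*} [CommRing R] {d : ℕ}

lemma regSeq_of_isRegular (y : Fin d → R)
    (h : RingTheory.Sequence.IsRegular R (List.ofFn y)) : RegSeq y := by
  intro i r hmem
  have hlen : i.1 < (List.ofFn y).length := by simp [i.2]
  have hw := h.toIsWeaklyRegular.regular_mod_prev i.1 hlen
  have hg : (List.ofFn y)[i.1]'hlen = y i := by simp
  rw [hg] at hw
  have hset : Ideal.ofList ((List.ofFn y).take i.1) = Ideal.span (y '' {k | k < i}) := by
    show Ideal.span _ = _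
    congr 1
    ext a
    simp only [Set.mem_setOf_eq, Set.mem_image]
    rw [List.mem_take_iff_getElem]
    constructor
    · rintro ⟨m, hm, rfl⟩
      have hmd : m < d := by
        have := Nat.lt_min.mp hm
        simpa using this.2
      refine ⟨⟨m, hmd⟩, ?_, by simp⟩
      show (⟨m, hmd⟩ : Fin d) < i
      rw [Fin.lt_def]
      exact (Nat.lt_min.mp hm).1
    · rintro ⟨k, hk, rfl⟩
      refine ⟨k.1, ?_, by simp⟩
      rw [Nat.lt_min]
      exact ⟨hk, by simp [k.2]⟩
  rw [hset] at hw
  have htop : (Ideal.span (y '' {k | k < i}) • (⊤ : Submodule R R))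
      = (Ideal.span (y '' {k | k < i}) : Submodule R R) := by
    rw [Submodule.span_smul_eq, Submodule.set_smul_top_eq_span]
  rw [htop] at hw
  have hz : y i • (Submodule.Quotient.mk r :
      R ⧸ (Ideal.span (y '' {k | k < i}) : Submodule R R)) = y i • 0 := by
    rw [smul_zero, ← Submodule.Quotient.mk_smul, smul_eq_mul,
      Submodule.Quotient.mk_eq_zero]
    exact hmem
  have := hw hz
  rwa [Submodule.Quotient.mk_eq_zero] at this

end RegConv

section TopCorrection

variable {R : Type*} [CommRing R]

lemma top_correction {d : ℕ} (y : Fin d → R)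
    (κ' : ℕ → Type*)
    (dG : ∀ j, (κ' (j+1) → R) →ₗ[R] (κ' j → R))
    (θ : ∀ j, KoszulTerm R d j →ₗ[R] (κ' j → R))
    (h : ∀ j, KoszulTerm R d j →ₗ[R] (κ' (j+1) → R))
    (hb : (dG 0).comp (h 0) = θ 0)
    (hs : ∀ j, (dG (j+1)).comp (h (j+1)) = θ (j+1) - (h j).comp (koszulD y j)) :
    ∃ C : KoszulTerm R d d →ₗ[R] (κ' d → R),
      (dG d).comp (h d) = θ d - C ∧
      ∀ (v : KoszulTerm R d d) (k : κ' d), C v k ∈ Ideal.span (Set.range y) := by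
  cases d with
  | zero =>
    exact ⟨0, by rw [sub_zero]; exact hb, fun v k => (Ideal.span _).zero_mem⟩
  | succ j =>
    refine ⟨(h j).comp (koszulD y j), hs j, fun v k => ?_⟩
    exact apply_mem_of_forall_mem (h j) (koszulD y j v) _ (fun t => koszulD_val_mem y j v t) k

end TopCorrection
end KoszulProof

open KoszulProof

/-- linkage lemma: let `y₁, …, y_d` be a regular sequence contained
in an ideal `I` of a commutative ring `R`, and let
`0 → R^n →^{∂d} ⋯ → R^{rk 1} →^{∂_0} R → R/I → 0` be a free resolution of
`R/I` of length `d`.  Suppose the Koszul complex `K_•(y; R)` maps to this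
resolution by a chain map `α` lifting the natural surjection `R/(y) → R/I`, the
bottom map being the identity of `R` and the top map `R = K_d → R^n` being given
by `(f₁, …, f_n)`.  Then `(y₁, …, y_d) : I = (y₁, …, y_d) + (f₁, …, f_n)`. -/
theorem stmt5 {R : Type*} [CommRing R] {d n : ℕ}
    (I : Ideal R) (y : Fin d → R)
    (hyreg : RingTheory.Sequence.IsRegular R (List.ofFn y))
    (hyI : Ideal.span (Set.range y) ≤ I)
    -- the free resolution `F` of `R/I`: ranks `rk j`, differentials `dF j : F_{j+1} → F_j`
    (rk : ℕ → ℕ) (hrk0 : rk 0 = 1) (hrkd : rk d = n) (hrktop : ∀ j, d < j → rk j = 0)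
    (dF : ∀ j : ℕ, (Fin (rk (j + 1)) → R) →ₗ[R] (Fin (rk j) → R))
    (ε : (Fin (rk 0) → R) →ₗ[R] R ⧸ I)
    (hε : Function.Surjective ε)
    (hexact0 : Function.Exact (dF 0) ε)
    (hexact : ∀ j : ℕ, Function.Exact (dF (j + 1)) (dF j))
    -- the chain map `α : K_•(y; R) → F_•` lifting `R/(y) → R/I`
    (α : ∀ j : ℕ, KoszulTerm R d j →ₗ[R] (Fin (rk j) → R))
    (hcomm : ∀ j : ℕ, (α j).comp (koszulD y j) = (dF j).comp (α (j + 1)))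
    (hlift : ∀ v : KoszulTerm R d 0,
      ε (α 0 v) = Ideal.Quotient.mk I (v ⟨(∅ : Finset (Fin d)), Finset.card_empty⟩))
    -- the top map `K_d = R → R^n = F_d` is given by the vector `f`
    (f : Fin (rk d) → R) (hf : f = α d (fun _ => (1 : R))) :
    (Ideal.span (Set.range y)).colon I =
      Ideal.span (Set.range y) ⊔ Ideal.span (Set.range f) := by
  classical
  set J := Ideal.span (Set.range y) with hJdef
  have hreg : RegSeq y := regSeq_of_isRegular y hyreg
  have hKzero : ∀ (x : KoszulTerm R d (d+1)), x = 0 := by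
    intro x; funext t
    have h1 : t.1.card ≤ d :=
      le_trans (Finset.card_le_card (Finset.subset_univ t.1)) (by simp)
    rw [t.2] at h1
    exact absurd h1 (by omega)
  have hFtop : ∀ (x : Fin (rk (d+1)) → R), x = 0 := by
    intro x; funext k
    have h0 : rk (d+1) = 0 := hrktop _ (by omega)
    exact absurd k.isLt (by omega)
  have hdd : ∀ j, (koszulD y j).comp (koszulD y (j+1)) = 0 :=
    fun j => LinearMap.ext (fun v => koszulD_sq y j v)
  have hdFF : ∀ j, (dF j).comp (dF (j+1)) = 0 :=
    fun j => LinearMap.ext (fun v => (hexact j (dF (j+1) v)).mpr ⟨v, rfl⟩)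
  have hexK : ∀ j (x : KoszulTerm R d (j+1)), koszulD y j x = 0 →
      x ∈ LinearMap.range (koszulD y (j+1)) := by
    intro j x hx
    obtain ⟨w, hw⟩ := koszul_exact y hreg j x hx
    exact ⟨w, hw⟩
  have hexF : ∀ j (x : Fin (rk (j+1)) → R), dF j x = 0 →
      x ∈ LinearMap.range (dF (j+1)) := by
    intro j x hx
    obtain ⟨w, hw⟩ := (hexact j x).mp hx
    exact ⟨w, hw⟩
  set e0 : Idx d 0 := ⟨∅, Finset.card_empty⟩ with he0def
  set eT : Idx d d := ⟨Finset.univ, by simp⟩ with heTdef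
  set v1 : KoszulTerm R d d := (fun _ => (1:R)) with hv1def
  have hdK0 : ∀ (x : KoszulTerm R d 0), x e0 ∈ J →
      x ∈ LinearMap.range (koszulD y 0) := by
    intro x hx
    obtain ⟨cf, hcf⟩ := (Submodule.mem_span_range_iff_exists_fun R).mp hx
    refine ⟨fun s => ∑ i ∈ s.1, cf i, ?_⟩
    funext t
    rw [show t = e0 from Subtype.ext (Finset.card_eq_zero.mp t.2)]
    have key : koszulD y 0 (fun s : Idx d 1 => ∑ i' ∈ s.1, cf i') e0
        = ∑ i, y i * cf i := by
      refine (koszulD_apply y 0 _ e0).trans ?_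
      refine Finset.sum_congr rfl (fun i _ => ?_)
      rw [dif_neg (show i ∉ (e0 : Idx d 0).1 from Finset.notMem_empty i)]
      show (-1:R)^(((∅ : Finset (Fin d)).filter (· < i)).card) * y i *
        (∑ i' ∈ insert i (∅ : Finset (Fin d)), cf i') = _
      rw [Finset.filter_empty, Finset.card_empty, pow_zero, one_mul,
        Finset.insert_empty, Finset.sum_singleton]
    rw [key, ← hcf]
    exact Finset.sum_congr rfl (fun i _ => by rw [smul_eq_mul, mul_comm])
  -- ⊇ direction
  have hyJcolon : J ≤ J.colon I := by
    intro x hxJ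
    rw [Submodule.mem_colon]
    intro p hp
    rw [smul_eq_mul]
    exact Ideal.mul_mem_right _ _ hxJ
  have hfcolon : ∀ (a : R), a ∈ I → ∀ k, f k * a ∈ J := by
    intro a ha
    obtain ⟨h, hb, hs⟩ := exists_chain_contraction (KoszulTerm R d)
      (fun j => Fin (rk j) → R) (fun j => Idx d j) (fun j => Pi.basisFun R _)
      (koszulD y) dF (fun j => a • α j) hdd
      (fun j => by rw [LinearMap.comp_smul, ← hcomm, LinearMap.smul_comp])
      (fun v => by
        have hz : ε ((a • α 0) v) = 0 := by
          rw [LinearMap.smul_apply, map_smul, hlift v]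
          have hsm : (a : R) • (Ideal.Quotient.mk I (v e0)) =
              Ideal.Quotient.mk I (a * (v e0)) := by
            rw [← Ideal.Quotient.mk_eq_mk, ← Ideal.Quotient.mk_eq_mk,
              ← Submodule.Quotient.mk_smul, smul_eq_mul]
          rw [hsm, Ideal.Quotient.eq_zero_iff_mem]
          exact I.mul_mem_right _ ha
        obtain ⟨w, hw⟩ := (hexact0 _).mp hz
        exact ⟨w, hw⟩)
      hexF
    obtain ⟨C, hCeq, hCmem⟩ := top_correction y (fun j => Fin (rk j)) dF
      (fun j => a • α j) h hb hs
    intro k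
    have h1 : dF d (h d v1) = 0 := by rw [hFtop (h d v1), map_zero]
    have h2 := LinearMap.congr_fun hCeq v1
    simp only [LinearMap.comp_apply, LinearMap.sub_apply, LinearMap.smul_apply] at h2
    rw [h1] at h2
    have h4 : a • (α d v1) = C v1 := sub_eq_zero.mp h2.symm
    have h5 : (a • (α d v1)) k ∈ J := by rw [h4]; exact hCmem v1 k
    have h6 : (a • (α d v1)) k = f k * a := by
      rw [Pi.smul_apply, smul_eq_mul, hf]
      exact mul_comm _ _
    rwa [h6] at h5
  have hsup_le : J ⊔ Ideal.span (Set.range f) ≤ J.colon I := by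
    refine sup_le hyJcolon ?_
    rw [Ideal.span_le]
    rintro x ⟨k, rfl⟩
    rw [SetLike.mem_coe, Submodule.mem_colon]
    intro p hp
    rw [smul_eq_mul]
    exact hfcolon p hp k
  -- ⊆ direction
  refine le_antisymm ?_ hsup_le
  intro r hr
  rw [Submodule.mem_colon] at hr
  have hμker : I ≤ LinearMap.ker (((J : Submodule R R).mkQ).comp (LinearMap.lsmul R R r)) := by
    intro x hx
    rw [LinearMap.mem_ker, LinearMap.comp_apply, LinearMap.lsmul_apply,
      Submodule.mkQ_apply, Submodule.Quotient.mk_eq_zero]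
    exact hr x hx
  set μ : (R ⧸ I) →ₗ[R] (R ⧸ (J : Submodule R R)) :=
    Submodule.liftQ I (((J : Submodule R R).mkQ).comp (LinearMap.lsmul R R r)) hμker
    with hμdef
  have hμ : ∀ x : R, μ (Ideal.Quotient.mk I x) = Submodule.Quotient.mk (r * x) := by
    intro x
    rw [← Ideal.Quotient.mk_eq_mk, hμdef, Submodule.liftQ_apply, LinearMap.comp_apply,
      LinearMap.lsmul_apply, Submodule.mkQ_apply, smul_eq_mul]
  set g0 : KoszulTerm R d 0 →ₗ[R] R ⧸ (J : Submodule R R) :=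
    ((J : Submodule R R).mkQ).comp (LinearMap.proj e0) with hg0def
  have hg0surj : ∀ c : R ⧸ (J : Submodule R R), ∃ x : KoszulTerm R d 0, g0 x = c := by
    intro c
    obtain ⟨c₀, hc₀⟩ := Submodule.mkQ_surjective (J : Submodule R R) c
    exact ⟨(fun _ => c₀), hc₀⟩
  obtain ⟨β₀, hβ₀c⟩ := exists_comp_eq (Pi.basisFun R (Fin (rk 0))) g0 (μ.comp ε)
    (fun x => by
      obtain ⟨w, hw⟩ := hg0surj ((μ.comp ε) x)
      exact ⟨w, hw⟩)
  have hβ0p : ∀ x, (Submodule.Quotient.mk (β₀ x e0) : R ⧸ (J : Submodule R R)) = μ (ε x) := by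
    intro x
    exact LinearMap.congr_fun hβ₀c x
  -- construct the chain map β : F → K
  obtain ⟨hB, hBb, hBs⟩ := exists_chain_contraction (fun j => Fin (rk (j+1)) → R)
      (KoszulTerm R d) (fun j => Fin (rk (j+1))) (fun j => Pi.basisFun R _)
      (fun j => dF (j+1)) (koszulD y)
      (fun j => match j with
        | 0 => β₀.comp (dF 0)
        | _+1 => 0)
      (fun j => hdFF (j+1))
      (fun j => by
        cases j with
        | zero =>
          show (koszulD y 0).comp (0 : _ →ₗ[R] _) = (β₀.comp (dF 0)).comp (dF 1)
          rw [LinearMap.comp_zero, LinearMap.comp_assoc, hdFF 0, LinearMap.comp_zero]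
        | succ j' =>
          show (koszulD y (j'+1)).comp (0 : _ →ₗ[R] _) = (0 : _ →ₗ[R] _).comp (dF (j'+2))
          rw [LinearMap.comp_zero, LinearMap.zero_comp])
      (fun v => by
        refine hdK0 _ ?_
        show β₀ (dF 0 v) e0 ∈ J
        have hε0 : ε (dF 0 v) = 0 := (hexact0 (dF 0 v)).mpr ⟨v, rfl⟩
        rw [← Submodule.Quotient.mk_eq_zero, hβ0p (dF 0 v), hε0, map_zero])
      hexK
  set β : ∀ j, (Fin (rk j) → R) →ₗ[R] KoszulTerm R d j :=
    fun j => match j with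
      | 0 => β₀
      | (j'+1) => ((-1:R)^j') • hB j'
    with hβdef
  have hβchain : ∀ j, (koszulD y j).comp (β (j+1)) = (β j).comp (dF j) := by
    intro j
    cases j with
    | zero =>
      show (koszulD y 0).comp (((-1:R)^0) • hB 0) = β₀.comp (dF 0)
      rw [pow_zero, one_smul]
      exact hBb
    | succ j' =>
      show (koszulD y (j'+1)).comp (((-1:R)^(j'+1)) • hB (j'+1))
        = (((-1:R)^j') • hB j').comp (dF (j'+1))
      rw [LinearMap.comp_smul, hBs j', LinearMap.smul_comp]
      show ((-1:R)^(j'+1)) • ((0 : _ →ₗ[R] _) - (hB j').comp (dF (j'+1)))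
        = ((-1:R)^j') • ((hB j').comp (dF (j'+1)))
      rw [zero_sub, pow_succ, mul_smul, neg_one_smul, neg_neg]
  -- the homotopy between r • id and β ∘ α on the Koszul complex
  obtain ⟨hh, hhb, hhs⟩ := exists_chain_contraction (KoszulTerm R d) (KoszulTerm R d)
      (fun j => Idx d j) (fun j => Pi.basisFun R _) (koszulD y) (koszulD y)
      (fun j => r • LinearMap.id - (β j).comp (α j)) hdd
      (fun j => by
        apply LinearMap.ext
        intro v
        have e1 : koszulD y j ((β (j+1)) ((α (j+1)) v)) = (β j) (dF j ((α (j+1)) v)) :=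
          LinearMap.congr_fun (hβchain j) ((α (j+1)) v)
        have e2 : (α j) (koszulD y j v) = dF j ((α (j+1)) v) :=
          LinearMap.congr_fun (hcomm j) v
        simp only [LinearMap.comp_apply, LinearMap.sub_apply, LinearMap.smul_apply,
          LinearMap.id_apply, map_sub, map_smul]
        rw [e1, ← e2])
      (fun v => by
        refine hdK0 _ ?_
        show r * v e0 - β₀ (α 0 v) e0 ∈ J
        refine (Submodule.Quotient.mk_eq_zero (J : Submodule R R)).mp ?_
        calc (Submodule.Quotient.mk (r * v e0 - β₀ (α 0 v) e0) : R ⧸ (J : Submodule R R))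
            = Submodule.Quotient.mk (r * v e0) - Submodule.Quotient.mk (β₀ (α 0 v) e0) :=
              map_sub ((J : Submodule R R).mkQ) _ _
          _ = Submodule.Quotient.mk (r * v e0) - μ (ε (α 0 v)) := by rw [hβ0p]
          _ = Submodule.Quotient.mk (r * v e0) - μ (Ideal.Quotient.mk I (v e0)) := by
              rw [hlift v]
          _ = Submodule.Quotient.mk (r * v e0) - Submodule.Quotient.mk (r * v e0) := by
              rw [hμ]
          _ = 0 := sub_self _)
      hexK
  obtain ⟨C, hCeq, hCmem⟩ :=
    let θ' : ∀ j, KoszulTerm R d j →ₗ[R] KoszulTerm R d j := fun j => r • LinearMap.id - (β j).comp (α j)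
    top_correction y (fun j => Idx d j) (koszulD y) θ' hh (by with_unfolding_all exact hhb) (by with_unfolding_all exact hhs)
  have h2 : koszulD y d (hh d v1) = (r • v1 - (β d) (α d v1)) - (show KoszulTerm R d d from C v1) :=
    LinearMap.congr_fun hCeq v1
  have hz : koszulD y d (hh d v1) = 0 := by rw [hKzero (hh d v1), map_zero]
  rw [hz] at h2
  have h3 : r • v1 - (β d) (α d v1) = C v1 := sub_eq_zero.mp h2.symm
  have h5 : (r • v1 - (β d) (α d v1)) eT = r - (β d f) eT := by
    show r • v1 eT - (β d) (α d v1) eT = _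
    rw [show (v1 eT : R) = 1 from rfl, smul_eq_mul, mul_one, ← hf]
  have h4 : r - (β d f) eT = C v1 eT := by
    rw [← h5]
    exact congrFun h3 eT
  have h6 : r = C v1 eT + (β d f) eT := eq_add_of_sub_eq h4
  have hβf : (β d f) eT ∈ Ideal.span (Set.range f) :=
    apply_mem_of_forall_mem (β d) f (Ideal.span (Set.range f))
      (fun k => Ideal.subset_span (Set.mem_range_self k)) eT
  rw [h6]
  exact Submodule.add_mem _ (Submodule.mem_sup_left (hCmem v1 eT))
    (Submodule.mem_sup_right hβf)
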